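/- arXiv:1001.2013 — 3 statements merged into one kernel-verified Lean document; each statement's English description precedes it below -/
import Mathlib

section
/- Let f(x) = Σ_{i≥0} a_i x^i be a power series in K⦃x⦄ (one variable) such that |f'(x)| ≥ 1 for all x in O_K. Then the SP-number of f is a (finite) integer r satisfying q_K^{r-1} ≤ ‖f − f(0)‖. Moreover, for all nonzero c ∈ M_K^r and all b ∈ O_K, one has |f_{b,c}|_SP ≥ 1, where f_{b,c}(t) := (1/c)·f(b + c·t). -/
open MeasureTheory Filter
open scoped NNReal ENNReal Classical

namespace VdC

variable {K : Type*} [NontriviallyNormedField K]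

/-! ### One-variable convergent power series over a non-archimedean local field -/

/-- Evaluation of a one-variable power series (given by its coefficients) at a point. -/
noncomputable def pseval (a : ℕ → K) (x : K) : K := ∑' i, a i * x ^ i

/-- Membership in `K⦃x⦄`: the coefficients tend to `0`, i.e. convergence on `O_K`. -/
def IsConvergent (a : ℕ → K) : Prop := Tendsto (fun i => ‖a i‖) atTop (nhds 0)

/-- Gauss norm of a power series. -/
noncomputable def gaussNorm (a : ℕ → K) : ℝ := ⨆ i, ‖a i‖

/-- Coefficients of `f - f(0)`. -/
def tail (a : ℕ → K) : ℕ → K := fun i => if i = 0 then 0 else a i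

/-- SP power series: `a 1 ≠ 0` and `a j ∈ a 1 • M_K` for all `j > 1`;
`‖a 1‖` is then the SP-norm `|f|_SP`. -/
def IsSP (a : ℕ → K) : Prop := a 1 ≠ 0 ∧ ∀ j, 1 < j → ‖a j‖ < ‖a 1‖

/-- Coefficients of `f_{b,c}(t) = (1/c) ⬝ f (b + c t)`. -/
noncomputable def shiftCoeff (a : ℕ → K) (b c : K) : ℕ → K :=
  fun j => c⁻¹ * c ^ j * ∑' m : ℕ, ((m + j).choose j : K) * a (m + j) * b ^ m

/-- `SPAt q a r` says: for all nonzero `c ∈ M_K ^ r` and all `b ∈ O_K`, the power series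
`f_{b,c}` is SP.  (Here `c ∈ M_K ^ r` iff `‖c‖ ≤ q⁻¹ ^ r`.)  The SP-number of `f` is the
least `r` with this property, i.e. `IsLeast {r | SPAt q a r} r`. -/
def SPAt (q : ℕ) (a : ℕ → K) (r : ℕ) : Prop :=
  ∀ b c : K, ‖b‖ ≤ 1 → c ≠ 0 → ‖c‖ ≤ (q : ℝ)⁻¹ ^ r → IsSP (shiftCoeff a b c)

/-- Coefficients of the derivative of a power series; `dcoeff^[k] a` gives `f^{(k)}`. -/
def dcoeff (a : ℕ → K) : ℕ → K := fun j => ((j + 1 : ℕ) : K) * a (j + 1)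

/-- `K` is a non-archimedean local field whose residue field has `q` elements, the norm
being normalized so that a uniformizer `π_K` has norm `q⁻¹`. -/
structure IsLocalField (K : Type*) [NontriviallyNormedField K] (q : ℕ) : Prop where
  nonarch : IsNonarchimedean (norm : K → ℝ)
  one_lt : 1 < q
  complete : CompleteSpace K
  exists_unif : ∃ π : K, ‖π‖ = (q : ℝ)⁻¹
  discrete : ∀ x : K, x ≠ 0 → ∃ m : ℤ, ‖x‖ = (q : ℝ) ^ m
  residue : ∃ T : Finset K, T.card = q ∧ (∀ t ∈ T, ‖t‖ ≤ 1) ∧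
      ∀ x : K, ‖x‖ ≤ 1 → ∃! t, t ∈ T ∧ ‖x - t‖ < 1

/-- `ψ` is an additive character on `K`, trivial on `M_K` and nontrivial on `O_K`. -/
structure IsAddChar (ψ : K → ℂ) : Prop where
  cont : Continuous ψ
  map_add : ∀ x y, ψ (x + y) = ψ x * ψ y
  norm_eq : ∀ x, ‖ψ x‖ = 1
  triv : ∀ x : K, ‖x‖ < 1 → ψ x = 1
  nontriv : ∃ x : K, ‖x‖ ≤ 1 ∧ ψ x ≠ 1

/-- The characteristic of `K` is zero or larger than `k`. -/
def CharCond (K : Type*) [NontriviallyNormedField K] (k : ℕ) : Prop :=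
  ∀ m : ℕ, m ≤ k → (m : K) = 0 → m = 0

/-- `p` is the residue characteristic of `K` (so `q = p ^ f` is the residue cardinality)
and `e = ord (p_K)` is the ramification degree of `K`, i.e. `‖p‖ = q ^ (-e)`. -/
def IsResidueData (K : Type*) [NontriviallyNormedField K] (q p e : ℕ) : Prop :=
  p.Prime ∧ (∃ f : ℕ, 0 < f ∧ q = p ^ f) ∧ 0 < e ∧ ‖(p : K)‖ = (q : ℝ)⁻¹ ^ e

/-- `f` is (Weierstrass) regular of degree `d`: it lies in `O_K⦃x⦄` and is congruent to
a monic polynomial of degree `d` modulo `π_K ⬝ O_K⦃x⦄`. -/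
def IsRegularOfDeg (a : ℕ → K) (d : ℕ) : Prop :=
  (∀ i, ‖a i‖ ≤ 1) ∧ ‖a d - 1‖ < 1 ∧ ∀ i, d < i → ‖a i‖ < 1

/-! ### Several variables -/

/-- Evaluation of a power series in `n` variables at a point. -/
noncomputable def mpseval {n : ℕ} (a : (Fin n → ℕ) → K) (x : Fin n → K) : K :=
  ∑' i : Fin n → ℕ, a i * ∏ j, x j ^ i j

/-- Membership in `K⦃x_1,…,x_n⦄`: `‖a i‖ → 0` as `|i| → ∞`. -/
def MIsConvergent {n : ℕ} (a : (Fin n → ℕ) → K) : Prop :=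
  Tendsto (fun i => ‖a i‖) cofinite (nhds 0)

/-- Gauss norm of a multivariate power series. -/
noncomputable def mgauss {n : ℕ} (a : (Fin n → ℕ) → K) : ℝ := ⨆ i, ‖a i‖

/-- Coefficients of `f - f(0)`. -/
def mtail {n : ℕ} (a : (Fin n → ℕ) → K) : (Fin n → ℕ) → K :=
  fun i => if i = 0 then 0 else a i

/-- Coefficients of the partial derivative `∂^α f` of a multivariate power series `f`. -/
noncomputable def mpderiv {n : ℕ} (a : (Fin n → ℕ) → K) (α : Fin n → ℕ) :
    (Fin n → ℕ) → K :=
  fun i => ((∏ j, (i j + α j).descFactorial (α j) : ℕ) : K) * a (fun j => i j + α j)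

/-- The unit polydisc `O_K ^ n`. -/
def polydisc (K : Type*) [NontriviallyNormedField K] (n : ℕ) : Set (Fin n → K) :=
  {x | ∀ i, ‖x i‖ ≤ 1}

/-! ### `K`-analytic manifolds with isometric charts, type conditions, induced measures -/

/-- An isometric analytic chart of the `d`-dimensional manifold `M ⊆ K^n` centered at
`x0 ∈ M`: `ι` selects the `d` coordinates of the coordinate projection `p : x ↦ x ∘ ι`,
and the inverse of `p` is given by the `n` convergent power series `F i`, parametrizing
`M ∩ {x : ‖x - x0‖ ≤ ‖c‖}` isometrically by the polydisc `x0 + (c O_K)^d`. -/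
def IsChartAt {n : ℕ} (d : ℕ) (M : Set (Fin n → K)) (x0 : Fin n → K)
    (ι : Fin d → Fin n) (c : K) (F : Fin n → (Fin d → ℕ) → K) : Prop :=
  Function.Injective ι ∧ c ≠ 0 ∧ (∀ i, MIsConvergent (F i)) ∧
  (∀ i, mpseval (F i) 0 = x0 i) ∧
  (∀ z : Fin d → K, z ∈ polydisc K d → ∀ j, mpseval (F (ι j)) z = x0 (ι j) + c * z j) ∧
  (∀ z z' : Fin d → K, z ∈ polydisc K d → z' ∈ polydisc K d →
      ∀ i, ‖mpseval (F i) z - mpseval (F i) z'‖ ≤ ‖c‖ * (⨆ j, ‖z j - z' j‖)) ∧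
  ((fun z : Fin d → K => fun i => mpseval (F i) z) '' polydisc K d
      = M ∩ {x | ∀ i, ‖x i - x0 i‖ ≤ ‖c‖})

/-- `M ⊆ K^n` is a `d`-dimensional `K`-analytic manifold (with isometric charts). -/
def IsManifold {n : ℕ} (d : ℕ) (M : Set (Fin n → K)) : Prop :=
  ∀ x0 ∈ M, ∃ ι c F, IsChartAt d M x0 ι c F

/-- `M` is of type at most `k` at the point `x0`: for some analytic chart `f = (F i)_i`
centered at `x0` and each nonzero `v ∈ K^n` there is a multi-index `α` with
`0 < |α| ≤ k` and `v ⬝ (∂^α f)(x0) ≠ 0`. -/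
def TypeAtMost {n : ℕ} (d : ℕ) (M : Set (Fin n → K)) (x0 : Fin n → K) (k : ℕ) : Prop :=
  ∃ ι c F, IsChartAt d M x0 ι c F ∧
    ∀ v : Fin n → K, v ≠ 0 → ∃ α : Fin d → ℕ, 0 < (∑ j, α j) ∧ (∑ j, α j) ≤ k ∧
      (∑ i, v i * mpseval (mpderiv (F i) α) 0) ≠ 0

/-- `M` is of type `k`: of type at most `k` at each of its points, `k` least such. -/
def IsOfType {n : ℕ} (d : ℕ) (M : Set (Fin n → K)) (k : ℕ) : Prop :=
  0 < k ∧ (∀ x ∈ M, TypeAtMost d M x k) ∧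
    ∀ k', (∀ x ∈ M, TypeAtMost d M x k') → k ≤ k'

/-- `μS` is the measure on the manifold `S ⊆ K^n` induced, via the isometric charts
of `S` (namely the coordinate projections `x ↦ x ∘ ι`), from the Haar measure `lamd` on
`K^d` normalized so that `O_K^d` has measure `1`. -/
def IsInducedMeasure [MeasurableSpace K] {n : ℕ} (d : ℕ) (S : Set (Fin n → K))
    (μS : Measure (Fin n → K)) (lamd : Measure (Fin d → K)) : Prop :=
  μS {x | x ∉ S} = 0 ∧
  ∀ x0 ∈ S, ∀ ι c F, IsChartAt d S x0 ι c F →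
    ∀ A : Set (Fin n → K), MeasurableSet A → A ⊆ S ∩ {x | ∀ i, ‖x i - x0 i‖ ≤ ‖c‖} →
      μS A = lamd ((fun x : Fin n → K => x ∘ ι) '' A)

/-! ### Maximal function and Riesz kernel on `K^n` -/

/-- The Hardy–Littlewood maximal function on `K^n`, where the balls are the sets
`a + b ⬝ O_K^n` with `b ≠ 0`. -/
noncomputable def maximalFn [MeasurableSpace K] {n : ℕ} (μ : Measure (Fin n → K))
    (f : (Fin n → K) → ℂ) (x : Fin n → K) : ℝ :=
  sSup {r : ℝ | ∃ (a : Fin n → K) (b : K), b ≠ 0 ∧ (∀ i, ‖x i - a i‖ ≤ ‖b‖) ∧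
    r = (μ {y | ∀ i, ‖y i - a i‖ ≤ ‖b‖}).toReal⁻¹ *
      ∫ y in {y : Fin n → K | ∀ i, ‖y i - a i‖ ≤ ‖b‖}, ‖f y‖ ∂μ}

/-- The kernel `y ↦ |y|^{-γ}` on `K^n`, extended by `0` at `0`. -/
noncomputable def rieszKernel {n : ℕ} (γ : ℝ) (y : Fin n → K) : ℂ :=
  if y = 0 then 0 else ((‖y‖ ^ (-γ) : ℝ) : ℂ)

end VdC

section Helpers

variable {K : Type*} [NontriviallyNormedField K]

lemma na_natCast_le_one (hna : IsNonarchimedean (norm : K → ℝ)) (n : ℕ) :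
    ‖(n : K)‖ ≤ 1 := by
  induction n with
  | zero => simp
  | succ m ih =>
      push_cast
      refine le_trans (hna _ _) (max_le ih (by simp))

lemma na_sum_le (hna : IsNonarchimedean (norm : K → ℝ)) {C : ℝ} (hC : 0 ≤ C)
    (f : ℕ → K) (hf : ∀ i, ‖f i‖ ≤ C) (s : Finset ℕ) : ‖∑ i ∈ s, f i‖ ≤ C := by
  classical
  induction s using Finset.induction with
  | empty => simpa using hC
  | insert _ _ hx ih =>
      rw [Finset.sum_insert hx]
      exact le_trans (hna _ _) (max_le (hf _) ih)

lemma na_tsum_le (hna : IsNonarchimedean (norm : K → ℝ)) {C : ℝ} (hC : 0 ≤ C)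
    (f : ℕ → K) (hf : ∀ i, ‖f i‖ ≤ C) : ‖∑' i, f i‖ ≤ C := by
  by_cases hs : Summable f
  · have h1 : Tendsto (fun s : Finset ℕ => ‖∑ i ∈ s, f i‖) atTop (nhds ‖∑' i, f i‖) :=
      (continuous_norm.tendsto _).comp hs.hasSum
    exact le_of_tendsto h1 (Eventually.of_forall fun s => na_sum_le hna hC f hf s)
  · rw [tsum_eq_zero_of_not_summable hs]; simpa using hC

open VdC in
lemma shiftCoeff_one' (a : ℕ → K) (b : K) {c : K} (hc : c ≠ 0) :
    VdC.shiftCoeff a b c 1 = VdC.pseval (VdC.dcoeff a) b := by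
  unfold VdC.shiftCoeff VdC.pseval
  rw [pow_one, inv_mul_cancel₀ hc, one_mul]
  refine tsum_congr fun m => ?_
  simp [VdC.dcoeff, Nat.choose_one_right, mul_assoc]

lemma pseval_dcoeff_zero' (a : ℕ → K) : VdC.pseval (VdC.dcoeff a) 0 = a 1 := by
  unfold VdC.pseval
  rw [tsum_eq_single 0 (by intro i hi; simp [zero_pow hi])]
  simp [VdC.dcoeff]

lemma shiftCoeff_norm_le' (hna : IsNonarchimedean (norm : K → ℝ)) (a : ℕ → K)
    {M : ℝ} (hM : 0 ≤ M) (hMa : ∀ i, 1 ≤ i → ‖a i‖ ≤ M)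
    {b c : K} (hb : ‖b‖ ≤ 1) (hc : c ≠ 0) (k : ℕ) :
    ‖VdC.shiftCoeff a b c (k + 1)‖ ≤ ‖c‖ ^ k * M := by
  have hc0 : ‖c‖ ≠ 0 := by simpa using hc
  unfold VdC.shiftCoeff
  rw [norm_mul, norm_mul, norm_inv, norm_pow]
  have hS : ‖∑' m : ℕ, (((m + (k + 1)).choose (k + 1) : K)) * a (m + (k + 1)) * b ^ m‖ ≤ M := by
    refine na_tsum_le hna hM _ fun m => ?_
    have h1 : ‖(((m + (k + 1)).choose (k + 1) : K))‖ ≤ 1 := na_natCast_le_one hna _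
    have h2 : ‖a (m + (k + 1))‖ ≤ M := hMa _ (by omega)
    have h3 : ‖b ^ m‖ ≤ 1 := by
      rw [norm_pow]; exact pow_le_one₀ (norm_nonneg b) hb
    calc ‖(((m + (k + 1)).choose (k + 1) : K)) * a (m + (k + 1)) * b ^ m‖
        = ‖(((m + (k + 1)).choose (k + 1) : K))‖ * ‖a (m + (k + 1))‖ * ‖b ^ m‖ := by
          rw [norm_mul, norm_mul]
      _ ≤ 1 * M * 1 :=
          mul_le_mul (mul_le_mul h1 h2 (norm_nonneg _) zero_le_one) h3 (norm_nonneg _)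
            (by simpa using hM)
      _ = M := by ring
  have he : ‖c‖⁻¹ * ‖c‖ ^ (k + 1) = ‖c‖ ^ k := by
    rw [pow_succ']
    exact inv_mul_cancel_left₀ hc0 _
  rw [he]
  exact mul_le_mul_of_nonneg_left hS (by positivity)

end Helpers


open VdC in
/-- Lemma 2.4.  Let `f = Σ aᵢ xⁱ ∈ K⦃x⦄` with `|f'(x)| ≥ 1` on `O_K`.
Then the SP-number of `f` is a finite integer `r` with `q^(r-1) ≤ ‖f - f(0)‖`, and for
all nonzero `c ∈ M_K^r` and all `b ∈ O_K` one has `|f_{b,c}|_SP ≥ 1`. -/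
theorem statement0 {K : Type*} [NontriviallyNormedField K] (q : ℕ)
    (hK : IsLocalField K q) (a : ℕ → K) (ha : IsConvergent a)
    (hder : ∀ x : K, ‖x‖ ≤ 1 → 1 ≤ ‖pseval (dcoeff a) x‖) :
    ∃ r : ℕ, IsLeast {r' : ℕ | SPAt q a r'} r ∧
      (q : ℝ) ^ ((r : ℤ) - 1) ≤ gaussNorm (tail a) ∧
      ∀ c : K, c ≠ 0 → ‖c‖ ≤ (q : ℝ)⁻¹ ^ r → ∀ b : K, ‖b‖ ≤ 1 →
        IsSP (shiftCoeff a b c) ∧ 1 ≤ ‖shiftCoeff a b c 1‖ := by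
  classical
  have hna := hK.nonarch
  have hq1 : (1 : ℝ) < (q : ℝ) := by exact_mod_cast hK.one_lt
  have hq0 : (0 : ℝ) < (q : ℝ) := lt_trans one_pos hq1
  have hbdd : BddAbove (Set.range fun i => ‖tail a i‖) := by
    obtain ⟨B, hB⟩ := ha.bddAbove_range
    refine ⟨B, ?_⟩
    rintro x ⟨i, rfl⟩
    by_cases hi : i = 0
    · have h0 : (0 : ℝ) ≤ B := le_trans (norm_nonneg (a 0)) (hB ⟨0, rfl⟩)
      simpa [tail, hi] using h0
    · simpa [tail, hi] using hB ⟨i, rfl⟩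
  have hMle : ∀ i, ‖tail a i‖ ≤ gaussNorm (tail a) := fun i => le_ciSup hbdd i
  set M := gaussNorm (tail a) with hMdef
  have hMa : ∀ i, 1 ≤ i → ‖a i‖ ≤ M := by
    intro i hi
    have hne : i ≠ 0 := by omega
    have h := hMle i
    simp only [tail, if_neg hne] at h
    exact h
  have h1a1 : 1 ≤ ‖a 1‖ := by
    have := hder 0 (by simp)
    rwa [pseval_dcoeff_zero' a] at this
  have h1M : 1 ≤ M := le_trans h1a1 (hMa 1 le_rfl)
  have hM0 : 0 ≤ M := zero_le_one.trans h1M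
  have hexn : ∃ n : ℕ, M < (q : ℝ) ^ n := pow_unbounded_of_one_lt M hq1
  set n0 := Nat.find hexn with hn0def
  have hn0 : M < (q : ℝ) ^ n0 := Nat.find_spec hexn
  have hn0pos : 0 < n0 := by
    rcases Nat.eq_zero_or_pos n0 with h | h
    · exfalso; rw [h, pow_zero] at hn0; linarith
    · exact h
  have hqs : (q : ℝ) ^ (n0 - 1) ≤ M := by
    by_contra hlt
    push_neg at hlt
    exact Nat.find_min hexn (show n0 - 1 < n0 by omega) hlt
  have key : SPAt q a n0 := by
    intro b c hb hc hcle
    have hc1 : ‖c‖ ≤ 1 := by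
      refine le_trans hcle (pow_le_one₀ (by positivity) ?_)
      rw [inv_le_one_iff₀]; right; exact le_of_lt hq1
    have hf' : 1 ≤ ‖shiftCoeff a b c 1‖ := by
      rw [shiftCoeff_one' a b hc]; exact hder b hb
    constructor
    · intro h0
      rw [h0, norm_zero] at hf'; linarith
    · intro j hj
      obtain ⟨k, hk1, rfl⟩ : ∃ k, 1 ≤ k ∧ j = k + 1 := ⟨j - 1, by omega, by omega⟩
      have hb1 := shiftCoeff_norm_le' hna a hM0 hMa hb hc k
      have h2 : ‖c‖ ^ k * M ≤ ‖c‖ * M := by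
        refine mul_le_mul_of_nonneg_right ?_ hM0
        calc ‖c‖ ^ k ≤ ‖c‖ ^ 1 := pow_le_pow_of_le_one (norm_nonneg c) hc1 hk1
          _ = ‖c‖ := pow_one _
      have h3 : ‖c‖ * M < 1 := by
        have hcle' : ‖c‖ ≤ ((q : ℝ) ^ n0)⁻¹ := by rwa [← inv_pow]
        calc ‖c‖ * M ≤ ((q : ℝ) ^ n0)⁻¹ * M := mul_le_mul_of_nonneg_right hcle' hM0
          _ < ((q : ℝ) ^ n0)⁻¹ * (q : ℝ) ^ n0 := by
              exact mul_lt_mul_of_pos_left hn0 (by positivity)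
          _ = 1 := inv_mul_cancel₀ (by positivity)
      calc ‖shiftCoeff a b c (k + 1)‖ ≤ ‖c‖ ^ k * M := hb1
        _ ≤ ‖c‖ * M := h2
        _ < 1 := h3
        _ ≤ ‖shiftCoeff a b c 1‖ := hf'
  have hexr : ∃ r, SPAt q a r := ⟨n0, key⟩
  refine ⟨Nat.find hexr, ⟨Nat.find_spec hexr, fun r' hr' => Nat.find_le hr'⟩, ?_, ?_⟩
  · have hrle : Nat.find hexr ≤ n0 := Nat.find_le key
    have h1 : ((Nat.find hexr : ℤ) - 1) ≤ ((n0 - 1 : ℕ) : ℤ) := by omega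
    calc (q : ℝ) ^ ((Nat.find hexr : ℤ) - 1)
        ≤ (q : ℝ) ^ ((n0 - 1 : ℕ) : ℤ) := zpow_le_zpow_right₀ (le_of_lt hq1) h1
      _ = (q : ℝ) ^ (n0 - 1) := zpow_natCast _ _
      _ ≤ M := hqs
  · intro c hc hcle b hb
    refine ⟨Nat.find_spec hexr b c hb hc hcle, ?_⟩
    rw [shiftCoeff_one' a b hc]
    exact hder b hb
end

section
/- Let f = Σ_{i≥0} a_i x^i ∈ K⦃x⦄ be SP. (1) If there exists d ∈ O_K with f(d) = 0, then |f(x)| = |f|_SP · |x − d| for all x ∈ O_K. (2) If no such d exists, then |f(x)| = |a_0| > |f|_SP for all x ∈ O_K. (3) In general, if e ∈ O_K is such that |f(e)| is minimal among the values |f(x)| for x ∈ O_K, then |f(x)| ≥ |f|_SP · |x − e| for all x ∈ O_K. -/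
open MeasureTheory Filter
open scoped NNReal ENNReal Classical

namespace VdCProof
open Filter VdC
variable {K : Type*} [NontriviallyNormedField K]


variable {K : Type*} [NontriviallyNormedField K]

lemma na_sum_le (na : IsNonarchimedean (norm : K → ℝ)) {ε : ℝ} (hε : 0 ≤ ε)
    (s : Finset ℕ) (f : ℕ → K) (h : ∀ i ∈ s, ‖f i‖ ≤ ε) : ‖∑ i ∈ s, f i‖ ≤ ε := by
  classical
  induction s using Finset.induction with
  | empty => simpa using hε
  | insert _ _ hx ih =>
    rename_i b t _
    rw [Finset.sum_insert ‹_›]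
    refine le_trans (na _ _) (max_le (h _ (Finset.mem_insert_self _ _)) ?_)
    exact ih fun i hi => h i (Finset.mem_insert_of_mem hi)

lemma na_add_eq (na : IsNonarchimedean (norm : K → ℝ)) {u v : K} (h : ‖v‖ < ‖u‖) :
    ‖u + v‖ = ‖u‖ := by
  refine le_antisymm (le_trans (na _ _) (by rw [max_eq_left h.le])) ?_
  have h2 : ‖u‖ ≤ max ‖u + v‖ ‖v‖ := by
    have := na (u + v) (-v)
    simpa using this
  rcases max_cases ‖u + v‖ ‖v‖ with ⟨he, _⟩ | ⟨he, _⟩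
  · rwa [he] at h2
  · rw [he] at h2; exact absurd (lt_of_le_of_lt h2 h) (lt_irrefl _)

lemma summable_of_norm_tendsto (na : IsNonarchimedean (norm : K → ℝ)) [CompleteSpace K]
    {f : ℕ → K} (h : Tendsto (fun i => ‖f i‖) atTop (nhds 0)) : Summable f := by
  rw [summable_iff_vanishing_norm]
  intro ε hε
  obtain ⟨N, hN⟩ := (Metric.tendsto_atTop.mp h) (ε / 2) (by positivity)
  refine ⟨Finset.range N, fun t ht => ?_⟩
  have : ‖∑ i ∈ t, f i‖ ≤ ε / 2 := by
    refine na_sum_le na (by positivity) t f fun i hi => ?_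
    have hiN : N ≤ i := by
      by_contra hc
      exact (Finset.disjoint_left.mp ht hi) (Finset.mem_range.mpr (by omega))
    have := hN i hiN
    rw [Real.dist_eq, sub_zero, abs_of_nonneg (norm_nonneg _)] at this
    exact this.le
  linarith

lemma na_tsum_le (na : IsNonarchimedean (norm : K → ℝ)) [CompleteSpace K]
    {f : ℕ → K} (hf : Summable f) {ε : ℝ} (hε : 0 ≤ ε) (h : ∀ i, ‖f i‖ ≤ ε) :
    ‖∑' i, f i‖ ≤ ε := by
  have := hf.hasSum
  refine le_of_tendsto this.norm ?_
  exact Filter.Eventually.of_forall fun s => na_sum_le na hε s f fun i _ => h i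

lemma summable_eval (na : IsNonarchimedean (norm : K → ℝ)) [CompleteSpace K]
    {a : ℕ → K} (ha : IsConvergent a) {x : K} (hx : ‖x‖ ≤ 1) :
    Summable (fun i => a i * x ^ i) := by
  refine summable_of_norm_tendsto na ?_
  refine squeeze_zero (fun i => norm_nonneg _) (fun i => ?_) ha
  rw [norm_mul, norm_pow]
  calc ‖a i‖ * ‖x‖ ^ i ≤ ‖a i‖ * 1 :=
        mul_le_mul_of_nonneg_left (pow_le_one₀ (norm_nonneg _) hx) (norm_nonneg _)
    _ = ‖a i‖ := mul_one _

lemma pseval_zero [CompleteSpace K] (a : ℕ → K) : pseval a 0 = a 0 := by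
  unfold pseval
  rw [tsum_eq_single 0 (fun i hi => by simp [zero_pow hi])]
  simp

/-- The dominating constant for the tail coefficients. -/
lemma exists_C {a : ℕ → K} (ha : IsConvergent a) (hsp : IsSP a) :
    ∃ C : ℝ, 0 ≤ C ∧ C < ‖a 1‖ ∧ ∀ j, 2 ≤ j → ‖a j‖ ≤ C := by
  have ha1 : 0 < ‖a 1‖ := norm_pos_iff.mpr hsp.1
  obtain ⟨N, hN⟩ := (Metric.tendsto_atTop.mp ha) (‖a 1‖ / 2) (by positivity)
  have hNval : ∀ i, N ≤ i → ‖a i‖ < ‖a 1‖ / 2 := by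
    intro i hi
    have := hN i hi
    rwa [Real.dist_eq, sub_zero, abs_of_nonneg (norm_nonneg _)] at this
  set g : ℕ → ℝ := fun i => if 2 ≤ i then ‖a i‖ else ‖a 1‖ / 2 with hg
  have hne : (Finset.range (N + 1)).Nonempty := ⟨0, by simp⟩
  refine ⟨(Finset.range (N + 1)).sup' hne g, ?_, ?_, ?_⟩
  · have hg0 : g 0 = ‖a 1‖ / 2 := by norm_num [hg]
    have h2 : g 0 ≤ (Finset.range (N + 1)).sup' hne g :=
      Finset.le_sup' g (by simp : (0:ℕ) ∈ Finset.range (N + 1))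
    rw [hg0] at h2
    linarith
  · rw [Finset.sup'_lt_iff]
    intro i _
    by_cases h2 : 2 ≤ i
    · simpa [hg, h2] using hsp.2 i (by omega)
    · simpa [hg, h2] using half_lt_self ha1
  · intro j hj
    rcases le_or_gt j N with hjN | hjN
    · have hmem : j ∈ Finset.range (N + 1) := Finset.mem_range.mpr (by omega)
      have := Finset.le_sup' g hmem
      simpa [hg, hj, -Finset.le_sup'_iff] using this
    · have h1 : ‖a j‖ ≤ ‖a 1‖ / 2 := (hNval j (by omega)).le
      have hg0 : g 0 = ‖a 1‖ / 2 := by norm_num [hg]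
      have h2 : g 0 ≤ (Finset.range (N + 1)).sup' hne g :=
        Finset.le_sup' g (by simp : (0:ℕ) ∈ Finset.range (N + 1))
      rw [hg0] at h2
      linarith


lemma key (na : IsNonarchimedean (norm : K → ℝ)) [CompleteSpace K]
    {a : ℕ → K} (ha : IsConvergent a) {C : ℝ} (hC0 : 0 ≤ C)
    (hC : ∀ j, 2 ≤ j → ‖a j‖ ≤ C) {x y : K} (hx : ‖x‖ ≤ 1) (hy : ‖y‖ ≤ 1) :
    ∃ S : K, pseval a x - pseval a y = S * (x - y) ∧ ‖S - a 1‖ ≤ C := by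
  classical
  set g : ℕ → K := fun i => a i * ∑ m ∈ Finset.range i, x ^ m * y ^ (i - 1 - m) with hgdef
  have hgnorm : ∀ i, ‖g i‖ ≤ ‖a i‖ := by
    intro i
    have hsum : ‖∑ m ∈ Finset.range i, x ^ m * y ^ (i - 1 - m)‖ ≤ 1 := by
      refine na_sum_le na zero_le_one _ _ fun m _ => ?_
      rw [norm_mul, norm_pow, norm_pow]
      exact mul_le_one₀ (pow_le_one₀ (norm_nonneg _) hx) (by positivity)
        (pow_le_one₀ (norm_nonneg _) hy)
    calc ‖g i‖ = ‖a i‖ * ‖∑ m ∈ Finset.range i, x ^ m * y ^ (i - 1 - m)‖ := norm_mul _ _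
      _ ≤ ‖a i‖ * 1 := mul_le_mul_of_nonneg_left hsum (norm_nonneg _)
      _ = ‖a i‖ := mul_one _
  have hgsum : Summable g := summable_of_norm_tendsto na
    (squeeze_zero (fun i => norm_nonneg _) hgnorm ha)
  refine ⟨∑' i, g i, ?_, ?_⟩
  · have h1 : pseval a x - pseval a y = ∑' i, (a i * x ^ i - a i * y ^ i) :=
      ((summable_eval na ha hx).tsum_sub (summable_eval na ha hy)).symm
    rw [h1]
    have h2 : ∀ i, a i * x ^ i - a i * y ^ i = g i * (x - y) := by
      intro i
      rw [hgdef]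
      simp only
      rw [mul_assoc, geom_sum₂_mul]
      ring
    rw [tsum_congr h2, tsum_mul_right]
  · have he : Summable (fun i : ℕ => if i = 1 then a 1 else 0) :=
      (hasSum_ite_eq 1 (a 1)).summable
    have h2 : (∑' i, g i) - a 1 = ∑' i, (g i - if i = 1 then a 1 else 0) := by
      rw [hgsum.tsum_sub he, tsum_ite_eq]
    rw [h2]
    refine na_tsum_le na (hgsum.sub he) hC0 fun i => ?_
    match i with
    | 0 => simpa [hgdef] using hC0
    | 1 => simpa [hgdef] using hC0
    | (n+2) =>
      rw [if_neg (by omega), sub_zero]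
      exact le_trans (hgnorm _) (hC _ (by omega))

lemma diff_eq (na : IsNonarchimedean (norm : K → ℝ)) [CompleteSpace K]
    {a : ℕ → K} (ha : IsConvergent a) (hsp : IsSP a) {x y : K}
    (hx : ‖x‖ ≤ 1) (hy : ‖y‖ ≤ 1) :
    ‖pseval a x - pseval a y‖ = ‖a 1‖ * ‖x - y‖ := by
  obtain ⟨C, hC0, hClt, hC⟩ := exists_C ha hsp
  obtain ⟨S, hSeq, hSle⟩ := key na ha hC0 hC hx hy
  have hS : ‖S‖ = ‖a 1‖ := by
    have : S = a 1 + (S - a 1) := by ring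
    rw [this, na_add_eq na (lt_of_le_of_lt hSle hClt)]
  rw [hSeq, norm_mul, hS]

lemma exists_root (na : IsNonarchimedean (norm : K → ℝ)) [CompleteSpace K]
    {a : ℕ → K} (ha : IsConvergent a) (hsp : IsSP a) (h0 : ‖a 0‖ ≤ ‖a 1‖) :
    ∃ d : K, ‖d‖ ≤ 1 ∧ pseval a d = 0 := by
  obtain ⟨C, hC0, hClt, hC⟩ := exists_C ha hsp
  have ha1 : 0 < ‖a 1‖ := norm_pos_iff.mpr hsp.1
  set ρ : ℝ := C / ‖a 1‖ with hρdef
  have hρ0 : 0 ≤ ρ := div_nonneg hC0 ha1.le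
  have hρ1 : ρ < 1 := (div_lt_one ha1).mpr hClt
  have hCeq : C = ρ * ‖a 1‖ := by rw [hρdef, div_mul_cancel₀ _ ha1.ne']
  set xs : ℕ → K := fun n => Nat.rec (0 : K) (fun _ xn => xn - pseval a xn / a 1) n with hxs
  have hxs0 : xs 0 = 0 := rfl
  have hxsS : ∀ n, xs (n+1) = xs n - pseval a (xs n) / a 1 := fun n => rfl
  have main : ∀ n, ‖xs n‖ ≤ 1 ∧ ‖pseval a (xs n)‖ ≤ ‖a 1‖ * ρ ^ n := by
    intro n
    induction n with
    | zero =>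
      refine ⟨by simp [hxs0], ?_⟩
      rw [hxs0, pseval_zero]
      simpa using h0
    | succ n ih =>
      obtain ⟨h1, h2⟩ := ih
      have hu : ‖pseval a (xs n) / a 1‖ ≤ ρ ^ n := by
        rw [norm_div, div_le_iff₀ ha1]
        calc ‖pseval a (xs n)‖ ≤ ‖a 1‖ * ρ ^ n := h2
          _ = ρ ^ n * ‖a 1‖ := mul_comm _ _
      have hu1 : ‖pseval a (xs n) / a 1‖ ≤ 1 := hu.trans (pow_le_one₀ hρ0 hρ1.le)
      have hx1 : ‖xs (n+1)‖ ≤ 1 := by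
        rw [hxsS, sub_eq_add_neg]
        exact le_trans (na _ _) (max_le h1 (by simpa using hu1))
      refine ⟨hx1, ?_⟩
      obtain ⟨S, hSeq, hSle⟩ := key na ha hC0 hC hx1 h1
      have heval : pseval a (xs (n+1)) = pseval a (xs n) * (a 1 - S) / a 1 := by
        have hxdiff : xs (n+1) - xs n = -(pseval a (xs n) / a 1) := by rw [hxsS n]; ring
        rw [hxdiff] at hSeq
        have ha1ne : a 1 ≠ 0 := hsp.1
        field_simp at hSeq ⊢
        linear_combination hSeq
      rw [heval, norm_div, norm_mul, norm_sub_rev, div_le_iff₀ ha1]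
      calc ‖pseval a (xs n)‖ * ‖S - a 1‖ ≤ (‖a 1‖ * ρ ^ n) * C :=
            mul_le_mul h2 hSle (norm_nonneg _) (by positivity)
        _ = (‖a 1‖ * ρ ^ (n+1)) * ‖a 1‖ := by rw [hCeq]; ring
  have hdist : ∀ n, dist (xs n) (xs (n+1)) ≤ 1 * ρ ^ n := by
    intro n
    rw [dist_eq_norm, hxsS n, one_mul,
      show xs n - (xs n - pseval a (xs n) / a 1) = pseval a (xs n) / a 1 from by ring,
      norm_div, div_le_iff₀ ha1]
    calc ‖pseval a (xs n)‖ ≤ ‖a 1‖ * ρ ^ n := (main n).2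
      _ = ρ ^ n * ‖a 1‖ := mul_comm _ _
  have hcauchy : CauchySeq xs := cauchySeq_of_le_geometric ρ 1 hρ1 hdist
  obtain ⟨d, hd⟩ := cauchySeq_tendsto_of_complete hcauchy
  have hball : ‖d‖ ≤ 1 := le_of_tendsto hd.norm (Eventually.of_forall fun n => (main n).1)
  refine ⟨d, hball, ?_⟩
  have t1 : Tendsto (fun n => pseval a (xs n)) atTop (nhds (pseval a d)) := by
    rw [tendsto_iff_dist_tendsto_zero]
    have hptw : ∀ n, dist (pseval a (xs n)) (pseval a d) = ‖a 1‖ * dist (xs n) d := by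
      intro n
      rw [dist_eq_norm, dist_eq_norm, diff_eq na ha hsp (main n).1 hball]
    have hd0 : Tendsto (fun n => dist (xs n) d) atTop (nhds 0) :=
      tendsto_iff_dist_tendsto_zero.mp hd
    simpa [hptw] using hd0.const_mul ‖a 1‖
  have t2 : Tendsto (fun n => pseval a (xs n)) atTop (nhds 0) := by
    rw [tendsto_zero_iff_norm_tendsto_zero]
    refine squeeze_zero (fun n => norm_nonneg _) (fun n => (main n).2) ?_
    simpa using (tendsto_pow_atTop_nhds_zero_of_lt_one hρ0 hρ1).const_mul ‖a 1‖
  exact tendsto_nhds_unique t1 t2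

end VdCProof

open VdC in
/-- Lemma 2.9.  Let `f = Σ aᵢ xⁱ ∈ K⦃x⦄` be SP.  (1) If `f(d) = 0` for
some `d ∈ O_K` then `|f(x)| = |f|_SP ⬝ |x - d|` on `O_K`.  (2) If there is no such `d`,
then `|f(x)| = |a₀| > |f|_SP` on `O_K`.  (3) If `|f(e)|` is minimal among the `|f(x)|`,
`x ∈ O_K`, then `|f(x)| ≥ |f|_SP ⬝ |x - e|` on `O_K`. -/
theorem statement2 {K : Type*} [NontriviallyNormedField K] (q : ℕ)
    (hK : IsLocalField K q) (a : ℕ → K) (ha : IsConvergent a) (hsp : IsSP a) :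
    (∀ d : K, ‖d‖ ≤ 1 → pseval a d = 0 →
        ∀ x : K, ‖x‖ ≤ 1 → ‖pseval a x‖ = ‖a 1‖ * ‖x - d‖) ∧
    ((¬ ∃ d : K, ‖d‖ ≤ 1 ∧ pseval a d = 0) →
        ‖a 1‖ < ‖a 0‖ ∧ ∀ x : K, ‖x‖ ≤ 1 → ‖pseval a x‖ = ‖a 0‖) ∧
    (∀ e : K, ‖e‖ ≤ 1 → (∀ x : K, ‖x‖ ≤ 1 → ‖pseval a e‖ ≤ ‖pseval a x‖) →
        ∀ x : K, ‖x‖ ≤ 1 → ‖a 1‖ * ‖x - e‖ ≤ ‖pseval a x‖) := by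

  haveI := hK.complete
  have na := hK.nonarch
  have part1 : ∀ d : K, ‖d‖ ≤ 1 → pseval a d = 0 →
      ∀ x : K, ‖x‖ ≤ 1 → ‖pseval a x‖ = ‖a 1‖ * ‖x - d‖ := by
    intro d hd hfd x hx
    have := VdCProof.diff_eq na ha hsp hx hd
    rwa [hfd, sub_zero] at this
  have part2 : (¬ ∃ d : K, ‖d‖ ≤ 1 ∧ pseval a d = 0) →
      ‖a 1‖ < ‖a 0‖ ∧ ∀ x : K, ‖x‖ ≤ 1 → ‖pseval a x‖ = ‖a 0‖ := by
    intro hno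
    have h01 : ‖a 1‖ < ‖a 0‖ := by
      by_contra hc
      push_neg at hc
      exact hno (VdCProof.exists_root na ha hsp hc)
    refine ⟨h01, fun x hx => ?_⟩
    have hdiff : ‖pseval a x - pseval a 0‖ ≤ ‖a 1‖ := by
      rw [VdCProof.diff_eq na ha hsp hx (by simp)]
      calc ‖a 1‖ * ‖x - 0‖ ≤ ‖a 1‖ * 1 := by
            rw [sub_zero]; exact mul_le_mul_of_nonneg_left hx (norm_nonneg _)
        _ = ‖a 1‖ := mul_one _
    have hp0 : pseval a (0:K) = a 0 := VdCProof.pseval_zero a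
    rw [hp0] at hdiff
    have hlt : ‖pseval a x - a 0‖ < ‖a 0‖ := lt_of_le_of_lt hdiff h01
    calc ‖pseval a x‖ = ‖a 0 + (pseval a x - a 0)‖ := by congr 1; ring
      _ = ‖a 0‖ := VdCProof.na_add_eq na hlt
  refine ⟨part1, part2, ?_⟩
  intro e he hmin x hx
  by_cases hex : ∃ d : K, ‖d‖ ≤ 1 ∧ pseval a d = 0
  · obtain ⟨d, hd, hfd⟩ := hex
    have hfe : pseval a e = 0 :=
      norm_le_zero_iff.mp (by simpa [hfd] using hmin d hd)
    rw [part1 e he hfe x hx]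
  · obtain ⟨h01, hval⟩ := part2 hex
    rw [hval x hx]
    have hxe : ‖x - e‖ ≤ 1 := by
      rw [sub_eq_add_neg]
      exact le_trans (na _ _) (max_le hx (by simpa using he))
    calc ‖a 1‖ * ‖x - e‖ ≤ ‖a 1‖ * 1 := mul_le_mul_of_nonneg_left hxe (norm_nonneg _)
      _ ≤ ‖a 0‖ := by rw [mul_one]; exact h01.le
end

section
/- Let f = Σ_{i≥0} a_i x^i ∈ K⦃x⦄ be SP. Then f has a zero in O_K if and only if |a_0| ≤ |f|_SP (equivalently, |a_0| ≤ |a_1|). -/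
open MeasureTheory Filter
open scoped NNReal ENNReal Classical

section Statement3Aux

open VdC IsUltrametricDist

variable {K : Type*} [NontriviallyNormedField K]

private lemma pow_sub_pow_norm_le [IsUltrametricDist K] {x y : K} (hx : ‖x‖ ≤ 1)
    (hy : ‖y‖ ≤ 1) (n : ℕ) : ‖x ^ n - y ^ n‖ ≤ ‖x - y‖ := by
  rw [← geom_sum₂_mul]
  rw [norm_mul]
  have : ‖∑ i ∈ Finset.range n, x ^ i * y ^ (n - 1 - i)‖ ≤ 1 := by
    apply norm_sum_le_of_forall_le_of_nonneg zero_le_one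
    intro i _
    rw [norm_mul]
    exact mul_le_one₀ ((norm_pow x i).le.trans (pow_le_one₀ (norm_nonneg _) hx))
      (norm_nonneg _) ((norm_pow y _).le.trans (pow_le_one₀ (norm_nonneg _) hy))
  calc ‖∑ i ∈ Finset.range n, x ^ i * y ^ (n - 1 - i)‖ * ‖x - y‖
      ≤ 1 * ‖x - y‖ := by gcongr
    _ = ‖x - y‖ := one_mul _

end Statement3Aux

open VdC in
/-- Let `f = Σ aᵢ xⁱ ∈ K⦃x⦄` be SP.  Then `f` has a zero in `O_K` if
and only if `|a₀| ≤ |f|_SP = |a₁|`. -/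


theorem statement3 {K : Type*} [NontriviallyNormedField K] (q : ℕ)
    (hK : IsLocalField K q) (a : ℕ → K) (ha : IsConvergent a) (hsp : IsSP a) :
    (∃ d : K, ‖d‖ ≤ 1 ∧ pseval a d = 0) ↔ ‖a 0‖ ≤ ‖a 1‖ := by
  haveI : IsUltrametricDist K := IsUltrametricDist.isUltrametricDist_of_isNonarchimedean_norm hK.nonarch
  haveI : CompleteSpace K := hK.complete
  have ha1 : (0:ℝ) < ‖a 1‖ := norm_pos_iff.mpr hsp.1
  -- summability on the closed unit disc
  have hsum : ∀ x : K, ‖x‖ ≤ 1 → Summable (fun i => a i * x ^ i) := by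
    intro x hx
    apply NonarchimedeanAddGroup.summable_of_tendsto_cofinite_zero
    rw [Nat.cofinite_eq_atTop]
    rw [tendsto_zero_iff_norm_tendsto_zero]
    apply squeeze_zero (fun i => norm_nonneg _) (g := fun i => ‖a i‖) _ ha
    intro i
    rw [norm_mul]
    calc ‖a i‖ * ‖x ^ i‖ ≤ ‖a i‖ * 1 := by
          gcongr
          exact (norm_pow x i).le.trans (pow_le_one₀ (norm_nonneg _) hx)
      _ = ‖a i‖ := mul_one _
  constructor
  · rintro ⟨d, hd, hz⟩
    have hS := hsum d hd
    have hsplit := Summable.sum_add_tsum_nat_add 1 hS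
    rw [pseval] at hz
    rw [hz, Finset.sum_range_one, pow_zero, mul_one] at hsplit
    have ha0 : ‖a 0‖ = ‖∑' i : ℕ, a (i + 1) * d ^ (i + 1)‖ := by
      have : a 0 = -∑' i : ℕ, a (i + 1) * d ^ (i + 1) := by linear_combination hsplit
      rw [this, norm_neg]
    rw [ha0]
    apply IsUltrametricDist.norm_tsum_le_of_forall_le_of_nonneg ha1.le
    intro i
    have h1 : ‖a (i + 1)‖ ≤ ‖a 1‖ := by
      rcases Nat.eq_zero_or_pos i with h | h
      · simp [h]
      · exact (hsp.2 (i + 1) (by omega)).le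
    rw [norm_mul]
    calc ‖a (i+1)‖ * ‖d ^ (i+1)‖ ≤ ‖a 1‖ * 1 := by
          refine mul_le_mul h1 ?_ (norm_nonneg _) ha1.le
          exact (norm_pow d _).le.trans (pow_le_one₀ (norm_nonneg _) hd)
      _ = ‖a 1‖ := mul_one _
  · intro h0
    -- find the max of the tail coefficients
    have htail : Tendsto (fun j : ℕ => ‖a (j + 2)‖) atTop (nhds 0) :=
      ha.comp (tendsto_add_atTop_nat 2)
    obtain ⟨j0, hj0⟩ : ∃ j0 : ℕ, ∀ j : ℕ, ‖a (j + 2)‖ ≤ ‖a (j0 + 2)‖ := by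
      by_cases hall : ∀ j : ℕ, a (j + 2) = 0
      · exact ⟨0, fun j => by simp [hall]⟩
      · push_neg at hall
        obtain ⟨k, hk⟩ := hall
        have hkpos : (0:ℝ) < ‖a (k + 2)‖ := norm_pos_iff.mpr hk
        obtain ⟨N, hN⟩ := (htail.eventually (eventually_lt_nhds hkpos)).exists_forall_of_atTop
        obtain ⟨j0, _, hj0⟩ := (Finset.range (N + k + 1)).exists_max_image
          (fun j => ‖a (j + 2)‖) ⟨k, Finset.mem_range.mpr (by omega)⟩
        refine ⟨j0, fun j => ?_⟩
        rcases lt_or_ge j (N + k + 1) with hj | hj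
        · exact hj0 j (Finset.mem_range.mpr hj)
        · exact (hN j (by omega)).le.trans (hj0 k (Finset.mem_range.mpr (by omega)))
    set r : ℝ := ‖a (j0 + 2)‖ with hrdef
    have hr0 : 0 ≤ r := norm_nonneg _
    have hrlt : r < ‖a 1‖ := hsp.2 (j0 + 2) (by omega)
    set κ : ℝ := r / ‖a 1‖ with hκdef
    have hκ0 : 0 ≤ κ := div_nonneg hr0 ha1.le
    have hκ1 : κ < 1 := (div_lt_one ha1).mpr hrlt
    -- the tail sum
    set S : K → K := fun x => ∑' j : ℕ, a (j + 2) * x ^ (j + 2) with hSdef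
    have hsumS : ∀ x : K, ‖x‖ ≤ 1 → Summable (fun j : ℕ => a (j + 2) * x ^ (j + 2)) := by
      intro x hx
      exact ((summable_nat_add_iff 2).mpr (hsum x hx) : _)
    have hSlip : ∀ x y : K, ‖x‖ ≤ 1 → ‖y‖ ≤ 1 → ‖S x - S y‖ ≤ r * ‖x - y‖ := by
      intro x y hx hy
      rw [hSdef]
      simp only
      rw [← Summable.tsum_sub (hsumS x hx) (hsumS y hy)]
      apply IsUltrametricDist.norm_tsum_le_of_forall_le_of_nonneg
        (mul_nonneg hr0 (norm_nonneg _))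
      intro j
      have := pow_sub_pow_norm_le hx hy (j + 2)
      calc ‖a (j+2) * x ^ (j+2) - a (j+2) * y ^ (j+2)‖
          = ‖a (j+2)‖ * ‖x ^ (j+2) - y ^ (j+2)‖ := by rw [← mul_sub, norm_mul]
        _ ≤ r * ‖x - y‖ := mul_le_mul (hj0 j) this (norm_nonneg _) hr0
    have hS0 : S 0 = 0 := by
      rw [hSdef]
      simp
    have hSle : ∀ x : K, ‖x‖ ≤ 1 → ‖S x‖ ≤ r := by
      intro x hx
      have := hSlip x 0 hx (by simp)
      rw [hS0, sub_zero, sub_zero] at this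
      calc ‖S x‖ ≤ r * ‖x‖ := this
        _ ≤ r * 1 := by gcongr
        _ = r := mul_one _
    -- the fixed point map
    set T : K → K := fun x => -((a 1)⁻¹ * (a 0 + S x)) with hTdef
    have hT1 : ∀ x : K, ‖x‖ ≤ 1 → ‖T x‖ ≤ 1 := by
      intro x hx
      rw [hTdef]
      simp only [norm_neg, norm_mul, norm_inv]
      have hb : ‖a 0 + S x‖ ≤ ‖a 1‖ := (IsUltrametricDist.norm_add_le_max _ _).trans
        (max_le h0 ((hSle x hx).trans hrlt.le))
      calc ‖a 1‖⁻¹ * ‖a 0 + S x‖ ≤ ‖a 1‖⁻¹ * ‖a 1‖ := by gcongr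
        _ = 1 := inv_mul_cancel₀ ha1.ne'
    have hTlip : ∀ x y : K, ‖x‖ ≤ 1 → ‖y‖ ≤ 1 → ‖T x - T y‖ ≤ κ * ‖x - y‖ := by
      intro x y hx hy
      have hTxy : T x - T y = -((a 1)⁻¹ * (S x - S y)) := by rw [hTdef]; ring
      rw [hTxy, norm_neg, norm_mul, norm_inv, hκdef, div_eq_inv_mul, mul_assoc]
      gcongr
      exact hSlip x y hx hy
    -- the iteration
    let u : ℕ → K := fun n => Nat.rec (0 : K) (fun _ x => T x) n
    have hu0 : u 0 = 0 := rfl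
    have huS : ∀ n, u (n + 1) = T (u n) := fun n => rfl
    have hu1 : ∀ n, ‖u n‖ ≤ 1 := by
      intro n
      induction n with
      | zero => simp [hu0]
      | succ n ih => rw [huS]; exact hT1 _ ih
    have hdiff : ∀ n, ‖u (n + 1) - u n‖ ≤ κ ^ n := by
      intro n
      induction n with
      | zero =>
        rw [hu0, sub_zero, pow_zero]
        exact hT1 0 (by simp)
      | succ n ih =>
        calc ‖u (n+2) - u (n+1)‖ = ‖T (u (n+1)) - T (u n)‖ := rfl
          _ ≤ κ * ‖u (n+1) - u n‖ := hTlip (u (n+1)) (u n) (hu1 (n+1)) (hu1 n)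
          _ ≤ κ * κ ^ n := by gcongr
          _ = κ ^ (n+1) := by rw [pow_succ]; ring
    have hcau : CauchySeq u := by
      apply cauchySeq_of_le_geometric κ 1 hκ1
      intro n
      rw [dist_eq_norm, norm_sub_rev, one_mul]
      exact hdiff n
    obtain ⟨d, hd⟩ := cauchySeq_tendsto_of_complete hcau
    have hd1 : ‖d‖ ≤ 1 := le_of_tendsto hd.norm (Filter.Eventually.of_forall hu1)
    -- the limit is a fixed point
    have hdu : Tendsto (fun n => ‖u n - d‖) atTop (nhds 0) := by
      rw [← tendsto_iff_norm_sub_tendsto_zero]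
      exact hd
    have hTfix : T d = d := by
      have h1 : Tendsto (fun n => T (u n)) atTop (nhds (T d)) := by
        rw [tendsto_iff_norm_sub_tendsto_zero]
        apply squeeze_zero (fun n => norm_nonneg _) (g := fun n => κ * ‖u n - d‖)
        · intro n
          exact hTlip (u n) d (hu1 n) hd1
        · simpa using hdu.const_mul κ
      have h2 : Tendsto (fun n => T (u n)) atTop (nhds d) := by
        have := hd.comp (tendsto_add_atTop_nat 1)
        simpa only [Function.comp_def, huS] using this
      exact tendsto_nhds_unique h1 h2
    refine ⟨d, hd1, ?_⟩
    have hsplit := Summable.sum_add_tsum_nat_add 2 (hsum d hd1)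
    have hrange2 : ∑ i ∈ Finset.range 2, a i * d ^ i = a 0 + a 1 * d := by
      simp [Finset.sum_range_succ]
    rw [pseval, ← hsplit, hrange2]
    have hSd : (S d : K) = ∑' i : ℕ, a (i + 2) * d ^ (i + 2) := rfl
    have hfix : -((a 1)⁻¹ * (a 0 + S d)) = d := hTfix
    have ha1' : a 1 ≠ 0 := hsp.1
    have : a 0 + S d = -(a 1 * d) := by
      have h2 : a 1 * -((a 1)⁻¹ * (a 0 + S d)) = a 1 * d := by rw [hfix]
      rw [mul_neg, ← mul_assoc, mul_inv_cancel₀ ha1', one_mul] at h2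
      linear_combination -h2
    rw [← hSd]
    linear_combination this
end
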